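/- The Frucht graph is asymmetric: its automorphism group is trivial. -/

import Mathlib

/-- Edge list of the Frucht graph: a 12-cycle with six chords. -/
def fruchtEdges : List (Fin 12 × Fin 12) :=
  [(0,1),(1,2),(2,3),(3,4),(4,5),(5,6),(6,7),(7,8),(8,9),(9,10),(10,11),(11,0),
   (0,4),(1,7),(2,9),(3,6),(5,11),(8,10)]

/-- The Frucht graph. -/
def frucht : SimpleGraph (Fin 12) where
  Adj x y := x ≠ y ∧ ((x, y) ∈ fruchtEdges ∨ (y, x) ∈ fruchtEdges)
  symm := ⟨fun _ _ h => ⟨h.1.symm, h.2.symm⟩⟩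
  loopless := ⟨fun _ h => h.1 rfl⟩

instance : DecidableRel frucht.Adj := fun x y =>
  decidable_of_iff (x ≠ y ∧ ((x, y) ∈ fruchtEdges ∨ (y, x) ∈ fruchtEdges)) Iff.rfl

lemma frucht_tri : ∀ a b c : Fin 12, frucht.Adj a b → frucht.Adj b c → frucht.Adj a c →
    ((a = 8 ∨ a = 9 ∨ a = 10) ∧ (b = 8 ∨ b = 9 ∨ b = 10) ∧ (c = 8 ∨ c = 9 ∨ c = 10)) := by
  decide

lemma hn8 : ∀ x, frucht.Adj x 8 → x = 7 ∨ x = 9 ∨ x = 10 := by decide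
lemma hn9 : ∀ x, frucht.Adj x 9 → x = 8 ∨ x = 10 ∨ x = 2 := by decide
lemma hn10 : ∀ x, frucht.Adj x 10 → x = 9 ∨ x = 11 ∨ x = 8 := by decide
lemma hn2 : ∀ x, frucht.Adj x 2 → x = 1 ∨ x = 3 ∨ x = 9 := by decide
lemma hn7 : ∀ x, frucht.Adj x 7 → x = 6 ∨ x = 8 ∨ x = 1 := by decide
lemma hc27 : ∀ x, frucht.Adj x 2 → frucht.Adj x 7 → x = 1 := by decide
lemma hc1_11 : ∀ x, frucht.Adj x 1 → frucht.Adj x 11 → x = 0 := by decide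
lemma hc6_11 : ∀ x, frucht.Adj x 6 → frucht.Adj x 11 → x = 5 := by decide
lemma hc35 : ∀ x, frucht.Adj x 3 → frucht.Adj x 5 → x = 4 ∨ x = 6 := by decide
lemma hno2_11 : ∀ x, frucht.Adj x 2 → frucht.Adj x 11 → False := by decide
lemma hno7_11 : ∀ x, frucht.Adj x 7 → frucht.Adj x 11 → False := by decide
lemma hno3_11 : ∀ x, frucht.Adj x 3 → frucht.Adj x 11 → False := by decide

/-- The Frucht graph is asymmetric: its automorphism group is trivial. -/
theorem stmt_11 : ∀ (f : frucht ≃g frucht) (v : Fin 12), f v = v := by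
  intro f v
  have hinj : Function.Injective f := f.toEquiv.injective
  have hadj : ∀ x y : Fin 12, frucht.Adj x y → frucht.Adj (f x) (f y) :=
    fun x y h => f.map_rel_iff.mpr h
  have a89 := hadj 8 9 (by decide)
  have a9_10 := hadj 9 10 (by decide)
  have a8_10 := hadj 8 10 (by decide)
  have a78 := hadj 7 8 (by decide)
  have a29 := hadj 2 9 (by decide)
  have a11_10 := hadj 11 10 (by decide)
  have a12 := hadj 1 2 (by decide)
  have a17 := hadj 1 7 (by decide)
  have a01 := hadj 0 1 (by decide)
  have a0_11 := hadj 0 11 (by decide)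
  have a67 := hadj 6 7 (by decide)
  have a56 := hadj 5 6 (by decide)
  have a5_11 := hadj 5 11 (by decide)
  have a32 := hadj 3 2 (by decide)
  have a34 := hadj 4 3 (by decide)
  have a45 := hadj 4 5 (by decide)
  obtain ⟨h8, h9, h10⟩ := frucht_tri _ _ _ a89 a9_10 a8_10
  rcases h10 with h10 | h10 | h10
  · -- f 10 = 8
    rcases h8 with h8 | h8 | h8
    · exact absurd (hinj (h8.trans h10.symm)) (by decide)
    · -- f 8 = 9
      rcases h9 with h9 | h9 | h9
      · exact absurd (hinj (h9.trans h10.symm)) (by decide)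
      · exact absurd (hinj (h9.trans h8.symm)) (by decide)
      · -- (f8,f9,f10) = (9,10,8)
        rw [h8] at a78
        rcases hn9 _ a78 with h7 | h7 | h7
        · exact absurd (hinj (h7.trans h10.symm)) (by decide)
        · exact absurd (hinj (h7.trans h9.symm)) (by decide)
        rw [h9] at a29
        rcases hn10 _ a29 with h2 | h2 | h2
        · exact absurd (hinj (h2.trans h8.symm)) (by decide)
        · rw [h7] at a17
          rw [h2] at a12
          exact (hno2_11 _ a17 a12).elim
        · exact absurd (hinj (h2.trans h10.symm)) (by decide)
    · -- f 8 = 10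
      rcases h9 with h9 | h9 | h9
      · exact absurd (hinj (h9.trans h10.symm)) (by decide)
      · -- (f8,f9,f10) = (10,9,8)
        rw [h8] at a78
        rcases hn10 _ a78 with h7 | h7 | h7
        · exact absurd (hinj (h7.trans h9.symm)) (by decide)
        · rw [h9] at a29
          rcases hn9 _ a29 with h2 | h2 | h2
          · exact absurd (hinj (h2.trans h10.symm)) (by decide)
          · exact absurd (hinj (h2.trans h8.symm)) (by decide)
          · rw [h7] at a17
            rw [h2] at a12
            exact (hno2_11 _ a12 a17).elim
        · exact absurd (hinj (h7.trans h10.symm)) (by decide)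
      · exact absurd (hinj (h9.trans h8.symm)) (by decide)
  · -- f 10 = 9
    rcases h8 with h8 | h8 | h8
    · -- f 8 = 8
      rcases h9 with h9 | h9 | h9
      · exact absurd (hinj (h9.trans h8.symm)) (by decide)
      · exact absurd (hinj (h9.trans h10.symm)) (by decide)
      · -- (8,10,9)
        rw [h8] at a78
        rcases hn8 _ a78 with h7 | h7 | h7
        · rw [h9] at a29
          rcases hn10 _ a29 with h2 | h2 | h2
          · exact absurd (hinj (h2.trans h10.symm)) (by decide)
          · rw [h7] at a17
            rw [h2] at a12
            exact (hno7_11 _ a17 a12).elim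
          · exact absurd (hinj (h2.trans h8.symm)) (by decide)
        · exact absurd (hinj (h7.trans h10.symm)) (by decide)
        · exact absurd (hinj (h7.trans h9.symm)) (by decide)
    · exact absurd (hinj (h8.trans h10.symm)) (by decide)
    · -- f 8 = 10
      rcases h9 with h9 | h9 | h9
      · -- (10,8,9)
        rw [h8] at a78
        rcases hn10 _ a78 with h7 | h7 | h7
        · exact absurd (hinj (h7.trans h10.symm)) (by decide)
        · rw [h9] at a29
          rcases hn8 _ a29 with h2 | h2 | h2
          · rw [h7] at a17
            rw [h2] at a12
            exact (hno7_11 _ a12 a17).elim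
          · exact absurd (hinj (h2.trans h10.symm)) (by decide)
          · exact absurd (hinj (h2.trans h8.symm)) (by decide)
        · exact absurd (hinj (h7.trans h9.symm)) (by decide)
      · exact absurd (hinj (h9.trans h10.symm)) (by decide)
      · exact absurd (hinj (h9.trans h8.symm)) (by decide)
  · -- f 10 = 10
    rw [h10] at a11_10
    rcases h8 with h8 | h8 | h8
    · -- f 8 = 8
      rcases h9 with h9 | h9 | h9
      · exact absurd (hinj (h9.trans h8.symm)) (by decide)
      · -- identity branch (8,9,10)
        have h11 : f 11 = 11 := by
          rcases hn10 _ a11_10 with h | h | h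
          · exact absurd (hinj (h.trans h9.symm)) (by decide)
          · exact h
          · exact absurd (hinj (h.trans h8.symm)) (by decide)
        have h7 : f 7 = 7 := by
          rw [h8] at a78
          rcases hn8 _ a78 with h | h | h
          · exact h
          · exact absurd (hinj (h.trans h9.symm)) (by decide)
          · exact absurd (hinj (h.trans h10.symm)) (by decide)
        have h2 : f 2 = 2 := by
          rw [h9] at a29
          rcases hn9 _ a29 with h | h | h
          · exact absurd (hinj (h.trans h8.symm)) (by decide)
          · exact absurd (hinj (h.trans h10.symm)) (by decide)
          · exact h
        rw [h2] at a12
        rw [h7] at a17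
        have h1 : f 1 = 1 := hc27 _ a12 a17
        rw [h1] at a01
        rw [h11] at a0_11
        have h0 : f 0 = 0 := hc1_11 _ a01 a0_11
        have h6 : f 6 = 6 := by
          rw [h7] at a67
          rcases hn7 _ a67 with h | h | h
          · exact h
          · exact absurd (hinj (h.trans h8.symm)) (by decide)
          · exact absurd (hinj (h.trans h1.symm)) (by decide)
        rw [h6] at a56
        rw [h11] at a5_11
        have h5 : f 5 = 5 := hc6_11 _ a56 a5_11
        have h3 : f 3 = 3 := by
          rw [h2] at a32
          rcases hn2 _ a32 with h | h | h
          · exact absurd (hinj (h.trans h1.symm)) (by decide)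
          · exact h
          · exact absurd (hinj (h.trans h9.symm)) (by decide)
        have h4 : f 4 = 4 := by
          rw [h3] at a34
          rw [h5] at a45
          rcases hc35 _ a34 a45 with h | h
          · exact h
          · exact absurd (hinj (h.trans h6.symm)) (by decide)
        fin_cases v
        · exact h0
        · exact h1
        · exact h2
        · exact h3
        · exact h4
        · exact h5
        · exact h6
        · exact h7
        · exact h8
        · exact h9
        · exact h10
        · exact h11
      · exact absurd (hinj (h9.trans h10.symm)) (by decide)
    · -- f 8 = 9
      rcases h9 with h9 | h9 | h9
      · -- (9,8,10)
        have h11 : f 11 = 11 := by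
          rcases hn10 _ a11_10 with h | h | h
          · exact absurd (hinj (h.trans h8.symm)) (by decide)
          · exact h
          · exact absurd (hinj (h.trans h9.symm)) (by decide)
        have h7 : f 7 = 2 := by
          rw [h8] at a78
          rcases hn9 _ a78 with h | h | h
          · exact absurd (hinj (h.trans h9.symm)) (by decide)
          · exact absurd (hinj (h.trans h10.symm)) (by decide)
          · exact h
        have h2 : f 2 = 7 := by
          rw [h9] at a29
          rcases hn8 _ a29 with h | h | h
          · exact h
          · exact absurd (hinj (h.trans h8.symm)) (by decide)
          · exact absurd (hinj (h.trans h10.symm)) (by decide)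
        rw [h7] at a17
        rw [h2] at a12
        have h1 : f 1 = 1 := hc27 _ a17 a12
        have h6 : f 6 = 3 := by
          rw [h7] at a67
          rcases hn2 _ a67 with h | h | h
          · exact absurd (hinj (h.trans h1.symm)) (by decide)
          · exact h
          · exact absurd (hinj (h.trans h8.symm)) (by decide)
        rw [h6] at a56
        rw [h11] at a5_11
        exact (hno3_11 _ a56 a5_11).elim
      · exact absurd (hinj (h9.trans h8.symm)) (by decide)
      · exact absurd (hinj (h9.trans h10.symm)) (by decide)
    · exact absurd (hinj (h8.trans h10.symm)) (by decide)
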